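/- If p is a prime with p dividing both m^2 - 2m + 9 and 7m^2 - 22m + 7 for some integer m, then p = 2 or p = 3. -/

import Mathlib

theorem stmt_5 (m : ℤ) (p : ℕ) (hp : p.Prime)
    (h1 : (p : ℤ) ∣ m ^ 2 - 2 * m + 9) (h2 : (p : ℤ) ∣ 7 * m ^ 2 - 22 * m + 7) :
    p = 2 ∨ p = 3 := by
  have h3 : (p : ℤ) ∣ 8 * m + 56 := by
    have := dvd_sub (h1.mul_left 7) h2
    convert this using 1; exacts [rfl, by ring]
  have h4 : (p : ℤ) ∣ 4608 := by
    have := dvd_sub (h1.mul_left 64) (h3.mul_left (8 * m - 72))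
    convert this using 1; exacts [rfl, by ring]
  have h5 : p ∣ 4608 := by exact_mod_cast h4
  have h6 : p ∣ 2 ^ 9 * 3 ^ 2 := by norm_num at h5 ⊢; exact h5
  rcases (hp.dvd_mul.mp h6) with h | h
  · left; exact (Nat.prime_dvd_prime_iff_eq hp Nat.prime_two).mp (hp.dvd_of_dvd_pow h)
  · right; exact (Nat.prime_dvd_prime_iff_eq hp Nat.prime_three).mp (hp.dvd_of_dvd_pow h)
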